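/- arXiv:2102.05903 — 5 statements merged into one kernel-verified Lean document; each statement's English description precedes it below -/
import Mathlib

section
/- Let J be a symmetric positive definite 2×2 real matrix with entries J11, J22 and off-diagonal J12, let L = J^{-1}, and let α1, α2 > 0 with α1 + α2 = 1. Write L11 = J22/Δ, L22 = J11/Δ, and the off-diagonal of L as -J12/Δ, where Δ = det J > 0. Then the matrix H = L - diag(α1, α2) is positive definite if and only if J11 < 1/α1, J22 < 1/α2, and J12² < (1/α1 - J11)(1/α2 - J22). -/
open Matrix

lemma posDef_fin_two_iff (M : Matrix (Fin 2) (Fin 2) ℝ) (hs : M 1 0 = M 0 1) :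
    M.PosDef ↔ 0 < M 0 0 ∧ 0 < M.det := by
  rw [Matrix.posDef_iff_dotProduct_mulVec, Matrix.det_fin_two, hs]
  constructor
  · intro h
    have h1 := h.2 (x := ![1, 0]) (by intro hc; simpa using congrFun hc 0)
    simp [dotProduct, mulVec, Fin.sum_univ_two, hs] at h1
    have h2 := h.2 (x := ![M 0 1, -(M 0 0)]) (by
      intro hc
      have := congrFun hc 1
      simp at this
      linarith)
    simp [dotProduct, mulVec, Fin.sum_univ_two, hs] at h2
    have key : 0 < M 0 0 * (M 0 0 * M 1 1 - M 0 1 * M 0 1) := by nlinarith [h2]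
    exact ⟨h1, by nlinarith [key, h1]⟩
  · rintro ⟨h1, h2⟩
    have hc : 0 < M 1 1 := by nlinarith [sq_nonneg (M 0 1)]
    constructor
    · ext i j
      fin_cases i <;> fin_cases j <;> simp [Matrix.conjTranspose, hs]
    · intro x hx
      have hx0 : x 0 ≠ 0 ∨ x 1 ≠ 0 := by
        by_contra hcc
        push_neg at hcc
        exact hx (funext fun i => by fin_cases i <;> simp [hcc.1, hcc.2])
      simp [dotProduct, mulVec, Fin.sum_univ_two, hs]
      rcases hx0 with h | h
      · nlinarith [sq_nonneg (M 0 1 * x 0 + M 1 1 * x 1), mul_pos h2 (mul_self_pos.2 h), hc]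
      · nlinarith [sq_nonneg (M 0 0 * x 0 + M 0 1 * x 1), mul_pos h2 (mul_self_pos.2 h), h1]

lemma scalar_iff (a b c α1 α2 : ℝ) (hα1 : 0 < α1) (hα2 : 0 < α2)
    (ha : 0 < a) (hd : 0 < a * c - b * b) :
    (0 < (a*c - b*b)⁻¹ * c - α1 ∧
      0 < ((a*c - b*b)⁻¹ * c - α1) * ((a*c - b*b)⁻¹ * a - α2) -
          ((a*c - b*b)⁻¹ * (-b)) * ((a*c - b*b)⁻¹ * (-b)))
    ↔ (a < 1 / α1 ∧ c < 1 / α2 ∧ b ^ 2 < (1 / α1 - a) * (1 / α2 - c)) := by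
  have hc : 0 < c := by nlinarith [mul_self_nonneg b]
  have hdne : (a * c - b * b) ≠ 0 := ne_of_gt hd
  have hdi : 0 < (a * c - b * b)⁻¹ := inv_pos.2 hd
  have e1 : (a*c - b*b)⁻¹ * c - α1 = (a*c - b*b)⁻¹ * (c - α1 * (a*c - b*b)) := by
    field_simp [show a * c - b ^ 2 ≠ 0 by rw [sq]; exact hdne]
  have e2 : ((a*c - b*b)⁻¹ * c - α1) * ((a*c - b*b)⁻¹ * a - α2) -
      ((a*c - b*b)⁻¹ * (-b)) * ((a*c - b*b)⁻¹ * (-b)) =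
      (a*c - b*b)⁻¹ * ((1 - α1*a) * (1 - α2*c) - α1*α2*(b*b)) := by
    field_simp [show a * c - b ^ 2 ≠ 0 by rw [sq]; exact hdne]
    ring
  rw [e2, e1, mul_pos_iff_of_pos_left hdi, mul_pos_iff_of_pos_left hdi,
    sub_pos, sub_pos]
  constructor
  · rintro ⟨h1, h2⟩
    have hs0 : (0:ℝ) ≤ α1*α2*(b*b) := mul_nonneg (by positivity) (mul_self_nonneg b)
    have hst : 0 < (1 - α1*a) * (1 - α2*c) := lt_of_le_of_lt hs0 h2
    have hu : 0 < 1 - α1 * a := by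
      by_contra hu
      push_neg at hu
      have hv : 1 - α2 * c ≤ 0 := by nlinarith
      nlinarith [mul_pos hα1 hα2, mul_pos hα2 hc]
    have hv : 0 < 1 - α2 * c := by nlinarith [hst, hu]
    refine ⟨?_, ?_, ?_⟩
    · rw [lt_div_iff₀ hα1]; nlinarith
    · rw [lt_div_iff₀ hα2]; nlinarith
    · have : (1/α1 - a) * (1/α2 - c) = ((1 - α1*a) * (1 - α2*c)) / (α1*α2) := by
        field_simp
      rw [this, lt_div_iff₀ (by positivity)]
      nlinarith
  · rintro ⟨h1, h2, h3⟩
    have hu : 0 < 1 - α1 * a := by rw [lt_div_iff₀ hα1] at h1; linarith [mul_comm a α1]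
    have hv : 0 < 1 - α2 * c := by rw [lt_div_iff₀ hα2] at h2; linarith [mul_comm c α2]
    constructor
    · nlinarith [mul_nonneg hα1.le (mul_self_nonneg b)]
    · have : (1/α1 - a) * (1/α2 - c) = ((1 - α1*a) * (1 - α2*c)) / (α1*α2) := by
        field_simp
      rw [this, lt_div_iff₀ (by positivity)] at h3
      nlinarith

/-- Characterisation of the high temperature regime for two groups:
`H = J⁻¹ - diag(α₁, α₂)` is positive definite iff
`J₁₁ < 1/α₁`, `J₂₂ < 1/α₂` and `J₁₂² < (1/α₁ - J₁₁)(1/α₂ - J₂₂)`. -/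
theorem high_temp_characterisation_two_groups
    (J : Matrix (Fin 2) (Fin 2) ℝ) (hJsymm : J.IsSymm) (hJpd : J.PosDef)
    (α1 α2 : ℝ) (hα1 : 0 < α1) (hα2 : 0 < α2) (hsum : α1 + α2 = 1) :
    (J⁻¹ - Matrix.diagonal ![α1, α2]).PosDef ↔
      (J 0 0 < 1 / α1 ∧ J 1 1 < 1 / α2 ∧
        (J 0 1) ^ 2 < (1 / α1 - J 0 0) * (1 / α2 - J 1 1)) := by
  have hs : J 1 0 = J 0 1 := by
    have := congrFun (congrFun hJsymm 0) 1
    simpa [Matrix.transpose_apply] using this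
  obtain ⟨ha, hdet⟩ := (posDef_fin_two_iff J hs).mp hJpd
  have hdval : J.det = J 0 0 * J 1 1 - J 0 1 * J 0 1 := by
    rw [Matrix.det_fin_two, hs]
  have hdpos : 0 < J.det := by rw [hdval]; linarith
  have hinv : J⁻¹ = J.det⁻¹ • !![J 1 1, -(J 0 1); -(J 0 1), J 0 0] := by
    rw [Matrix.inv_def, Matrix.adjugate_fin_two, Ring.inverse_eq_inv', hs]
  set H := J⁻¹ - Matrix.diagonal ![α1, α2] with hH
  have e00 : H 0 0 = J.det⁻¹ * J 1 1 - α1 := by simp [hH, hinv]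
  have e01 : H 0 1 = J.det⁻¹ * (-(J 0 1)) := by simp [hH, hinv]
  have e10 : H 1 0 = J.det⁻¹ * (-(J 0 1)) := by simp [hH, hinv]
  have e11 : H 1 1 = J.det⁻¹ * J 0 0 - α2 := by simp [hH, hinv]
  rw [posDef_fin_two_iff H (by rw [e10, e01]), Matrix.det_fin_two,
    e00, e01, e10, e11, hdval]
  have hd' : 0 < J 0 0 * J 1 1 - J 0 1 * J 0 1 := by linarith
  have := scalar_iff (J 0 0) (J 0 1) (J 1 1) α1 α2 hα1 hα2 ha hd'
  convert this using 3
end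

section
/- For β ≥ 0, the equation tanh(βx) = x has x = 0 as its unique real solution if and only if β ≤ 1; if β > 1, there are exactly three solutions -x1, 0, x1 with x1 ∈ (0,1). -/
open Real

lemma tanh_eq_exp (t : ℝ) : Real.tanh t = (Real.exp (2*t) - 1) / (Real.exp (2*t) + 1) := by
  have h1 : Real.exp t ≠ 0 := (Real.exp_pos t).ne'
  have h2 : (0:ℝ) < Real.exp t + Real.exp (-t) := by positivity
  have h3 : (0:ℝ) < Real.exp (2*t) + 1 := by positivity
  rw [Real.tanh_eq_sinh_div_cosh, Real.sinh_eq, Real.cosh_eq,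
    show (2:ℝ)*t = t + t by ring, Real.exp_add, Real.exp_neg]
  field_simp

lemma tanh_mem_Ioo (t : ℝ) : Real.tanh t ∈ Set.Ioo (-1:ℝ) 1 := by
  rw [tanh_eq_exp]
  have h : (0:ℝ) < Real.exp (2*t) := Real.exp_pos _
  constructor
  · rw [lt_div_iff₀ (by linarith)]; linarith
  · rw [div_lt_iff₀ (by linarith)]; linarith

lemma tanh_injective : Function.Injective Real.tanh := by
  have mono : StrictMono Real.tanh := by
    intro a b hab
    rw [tanh_eq_exp, tanh_eq_exp]
    have ha : (0:ℝ) < Real.exp (2*a) := Real.exp_pos _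
    have hb : (0:ℝ) < Real.exp (2*b) := Real.exp_pos _
    have h : Real.exp (2*a) < Real.exp (2*b) := Real.exp_lt_exp.2 (by linarith)
    rw [div_lt_div_iff₀ (by linarith) (by linarith)]
    nlinarith
  exact mono.injective

noncomputable def Atanh (x : ℝ) : ℝ := Real.log ((1+x)/(1-x)) / 2

lemma tanh_Atanh {x : ℝ} (hx : x ∈ Set.Ioo (-1:ℝ) 1) : Real.tanh (Atanh x) = x := by
  obtain ⟨h1, h2⟩ := hx
  have hu : (0:ℝ) < (1+x)/(1-x) := by
    apply div_pos <;> linarith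
  rw [tanh_eq_exp, Atanh, show 2 * (Real.log ((1+x)/(1-x)) / 2) = Real.log ((1+x)/(1-x)) by ring,
    Real.exp_log hu]
  rw [div_eq_iff]
  · have h3 : (1:ℝ) - x ≠ 0 := by linarith
    field_simp
    ring
  · have : (0:ℝ) < (1+x)/(1-x) + 1 := by linarith
    linarith

lemma Atanh_hasDeriv {x : ℝ} (hx : x ∈ Set.Ioo (-1:ℝ) 1) :
    HasDerivAt Atanh (1 / (1 - x^2)) x := by
  obtain ⟨h1, h2⟩ := hx
  have e1 : HasDerivAt (fun y : ℝ => Real.log (1 + y)) (1/(1+x)) x := by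
    have := (Real.hasDerivAt_log (x := 1 + x) (by linarith)).comp x
      ((hasDerivAt_id x).const_add 1)
    simpa [one_div, Function.comp_def] using this
  have e2 : HasDerivAt (fun y : ℝ => Real.log (1 - y)) (-(1/(1-x))) x := by
    have := (Real.hasDerivAt_log (x := 1 - x) (by linarith)).comp x
      ((hasDerivAt_id x).const_sub 1)
    simpa [one_div, Function.comp_def] using this
  have e3 : HasDerivAt (fun y : ℝ => (Real.log (1+y) - Real.log (1-y)) / 2)
      ((1/(1+x) - -(1/(1-x))) / 2) x := (e1.sub e2).div_const 2
  have heq : Atanh =ᶠ[nhds x] (fun y : ℝ => (Real.log (1+y) - Real.log (1-y)) / 2) := by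
    filter_upwards [Ioo_mem_nhds h1 h2] with y hy
    have hy1 : (1:ℝ) + y ≠ 0 := by linarith [hy.1]
    have hy2 : (1:ℝ) - y ≠ 0 := by linarith [hy.2]
    rw [Atanh, Real.log_div hy1 hy2]
  have e4 := e3.congr_of_eventuallyEq heq
  refine e4.congr_deriv ?_
  have ha : (1:ℝ) + x ≠ 0 := by linarith
  have hb : (1:ℝ) - x ≠ 0 := by linarith
  have hc : (1:ℝ) - x^2 ≠ 0 := by nlinarith
  symm
  rw [eq_div_iff two_ne_zero, sub_neg_eq_add, div_add_div _ _ ha hb, div_mul_eq_mul_div,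
    div_eq_div_iff hc (mul_ne_zero ha hb)]
  ring

lemma Atanh_gt {x : ℝ} (hx : x ∈ Set.Ioo (0:ℝ) 1) : x < Atanh x := by
  obtain ⟨h1, h2⟩ := hx
  have mono : StrictMonoOn (fun y => Atanh y - y) (Set.Ico (0:ℝ) 1) := by
    apply strictMonoOn_of_deriv_pos (convex_Ico 0 1)
    · intro y hy
      have : y ∈ Set.Ioo (-1:ℝ) 1 := ⟨by linarith [hy.1], hy.2⟩
      exact ((Atanh_hasDeriv this).sub (hasDerivAt_id y)).continuousAt.continuousWithinAt
    · intro y hy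
      rw [interior_Ico] at hy
      obtain ⟨hy1, hy2⟩ := hy
      have hd : HasDerivAt (fun y => Atanh y - y) (1/(1-y^2) - 1) y :=
        (Atanh_hasDeriv ⟨by linarith, hy2⟩).sub (hasDerivAt_id y)
      rw [hd.deriv]
      have : (0:ℝ) < 1 - y^2 := by nlinarith
      rw [sub_pos, lt_div_iff₀ this]
      nlinarith
  have h0 : Atanh 0 - 0 < Atanh x - x :=
    mono (by constructor <;> norm_num) ⟨le_of_lt h1, h2⟩ h1
  have : Atanh 0 = 0 := by simp [Atanh]
  linarith [h0, this]

lemma solution_iff {β x : ℝ} :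
    Real.tanh (β * x) = x ↔ (x ∈ Set.Ioo (-1:ℝ) 1 ∧ β * x = Atanh x) := by
  constructor
  · intro h
    have hx : x ∈ Set.Ioo (-1:ℝ) 1 := h ▸ tanh_mem_Ioo (β*x)
    exact ⟨hx, _root_.tanh_injective (by rw [h, tanh_Atanh hx])⟩
  · rintro ⟨hx, h⟩
    rw [h, tanh_Atanh hx]

lemma Atanh_continuousOn : ContinuousOn Atanh (Set.Ioo (-1:ℝ) 1) :=
  fun y hy => (Atanh_hasDeriv hy).continuousAt.continuousWithinAt

lemma phi_strictConvex {β : ℝ} :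
    StrictConvexOn ℝ (Set.Ico (0:ℝ) 1) (fun x => Atanh x - β * x) := by
  apply StrictMonoOn.strictConvexOn_of_deriv (convex_Ico 0 1)
  · intro y hy
    exact ((Atanh_hasDeriv ⟨by linarith [hy.1], hy.2⟩).sub
      ((hasDerivAt_id y).const_mul β)).continuousAt.continuousWithinAt
  · rw [interior_Ico]
    intro a ha b hb hab
    have hda : HasDerivAt (fun x => Atanh x - β * x) (1/(1-a^2) - β * 1) a :=
      (Atanh_hasDeriv ⟨by linarith [ha.1], ha.2⟩).sub ((hasDerivAt_id a).const_mul β)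
    have hdb : HasDerivAt (fun x => Atanh x - β * x) (1/(1-b^2) - β * 1) b :=
      (Atanh_hasDeriv ⟨by linarith [hb.1], hb.2⟩).sub ((hasDerivAt_id b).const_mul β)
    rw [hda.deriv, hdb.deriv]
    have h1 : (0:ℝ) < 1 - b^2 := by nlinarith [hb.1, hb.2]
    have h2 : (0:ℝ) < 1 - a^2 := by nlinarith [ha.1, ha.2]
    have : 1/(1-a^2) < 1/(1-b^2) := by
      apply div_lt_div_of_pos_left one_pos h1
      nlinarith [ha.1]
    linarith

lemma pos_root_unique {β a b : ℝ} (ha : a ∈ Set.Ioo (0:ℝ) 1) (hb : b ∈ Set.Ioo (0:ℝ) 1)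
    (hra : β * a = Atanh a) (hrb : β * b = Atanh b) : a = b := by
  by_contra hne
  wlog hab : a < b generalizing a b
  · exact this hb ha hrb hra (Ne.symm hne) (by cases lt_or_gt_of_ne hne with
      | inl h => exact absurd h hab
      | inr h => exact h)
  set φ : ℝ → ℝ := fun x => Atanh x - β * x with hφ
  have sc := phi_strictConvex (β := β)
  have h0 : φ 0 = 0 := by simp [hφ, Atanh]
  have hA : φ a = 0 := by simp only [hφ, ← hra]; ring
  have hB : φ b = 0 := by simp only [hφ, ← hrb]; ring
  have hbne : (0:ℝ) ≠ b := (ne_of_lt hb.1)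
  have hbpos : (0:ℝ) < b := hb.1
  have ht2 : (0:ℝ) < a / b := div_pos ha.1 hbpos
  have ht1 : (0:ℝ) < 1 - a / b := by
    rw [sub_pos, div_lt_one hbpos]; exact hab
  have hsum : (1 - a / b) + a / b = 1 := by ring
  have key := sc.2 (x := 0) ⟨le_refl 0, one_pos⟩ (y := b) ⟨le_of_lt hbpos, hb.2⟩
    hbne ht1 ht2 hsum
  have hcomb : (1 - a / b) • (0:ℝ) + (a / b) • b = a := by
    field_simp
    simp [hbne.symm]
  rw [hcomb] at key
  have : φ a < (1 - a/b) * φ 0 + (a/b) * φ b := key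
  rw [h0, hA, hB] at this
  linarith

lemma tanh_pos {t : ℝ} (ht : 0 < t) : 0 < Real.tanh t := by
  rw [tanh_eq_exp]
  have h : (1:ℝ) < Real.exp (2*t) := by
    rw [← Real.exp_zero]; exact Real.exp_lt_exp.2 (by linarith)
  apply div_pos (by linarith) (by linarith)

lemma exists_pos_root {β : ℝ} (hβ : 1 < β) :
    ∃ x1 ∈ Set.Ioo (0:ℝ) 1, β * x1 = Atanh x1 := by
  set φ : ℝ → ℝ := fun x => Atanh x - β * x with hφ
  set x0 : ℝ := (β - 1) / (2*β - 1) with hx0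
  have hβ1 : (0:ℝ) < 2*β - 1 := by linarith
  have hx0pos : 0 < x0 := div_pos (by linarith) hβ1
  have hx0lt : x0 < 1 := by
    rw [hx0, div_lt_one hβ1]; linarith
  have h1mx0 : 1 - x0 = β / (2*β - 1) := by
    rw [hx0]; rw [eq_div_iff hβ1.ne', sub_mul, div_mul_cancel₀ _ hβ1.ne']; ring
  have hneg : φ x0 < 0 := by
    have hp1 : (0:ℝ) < 1 + x0 := by linarith
    have hp2 : (0:ℝ) < 1 - x0 := by linarith
    have l1 : Real.log (1 + x0) < x0 := by
      have := Real.log_lt_sub_one_of_pos hp1 (by linarith)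
      linarith
    have l2 : Real.log (1 - x0)⁻¹ ≤ (1 - x0)⁻¹ - 1 :=
      Real.log_le_sub_one_of_pos (by positivity)
    have l3 : Real.log (1 - x0) = -Real.log (1 - x0)⁻¹ := by
      rw [Real.log_inv]; ring
    have hA : Atanh x0 = (Real.log (1 + x0) - Real.log (1 - x0)) / 2 := by
      rw [Atanh, Real.log_div (by linarith) (by linarith)]
    have hinv : (1 - x0)⁻¹ = (2*β - 1) / β := by
      rw [h1mx0]; rw [inv_div]
    have hβpos : (0:ℝ) < β := by linarith
    have hu : x0 * (2*β - 1) = β - 1 := by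
      rw [hx0]; exact div_mul_cancel₀ _ hβ1.ne'
    have hv : ((2*β - 1)/β) * β = 2*β - 1 := by field_simp
    have key : x0 + ((2*β-1)/β - 1) ≤ 2 * (β * x0) := by
      nlinarith [hu, hv, mul_pos hβpos hβ1, sq_nonneg (β - 1)]
    rw [hinv] at l2
    rw [hφ]
    show Atanh x0 - β * x0 < 0
    rw [hA, l3, hinv]
    linarith
  have hx2 : Real.tanh (β + 1) ∈ Set.Ioo (0:ℝ) 1 :=
    ⟨tanh_pos (by linarith), (tanh_mem_Ioo (β+1)).2⟩
  set x2 : ℝ := Real.tanh (β + 1) with hx2def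
  have hAx2 : Atanh x2 = β + 1 := by
    apply _root_.tanh_injective
    rw [tanh_Atanh ⟨by linarith [hx2.1], hx2.2⟩]
  have hposφ : 0 < φ x2 := by
    rw [hφ]; simp only [hAx2]
    nlinarith [hx2.2, hx2.1]
  have hsub : Set.uIcc x0 x2 ⊆ Set.Ioo (-1:ℝ) 1 :=
    (Set.ordConnected_Ioo).uIcc_subset ⟨by linarith, hx0lt⟩ ⟨by linarith [hx2.1], hx2.2⟩
  have hcont : ContinuousOn φ (Set.uIcc x0 x2) := fun y hy =>
    ((Atanh_hasDeriv (hsub hy)).sub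
      ((hasDerivAt_id y).const_mul β)).continuousAt.continuousWithinAt
  have hive := intermediate_value_uIcc hcont
  have h0mem : (0:ℝ) ∈ Set.uIcc (φ x0) (φ x2) := by
    rw [Set.mem_uIcc]
    left; exact ⟨le_of_lt hneg, le_of_lt hposφ⟩
  obtain ⟨x1, hx1mem, hx1⟩ := hive h0mem
  refine ⟨x1, ?_, ?_⟩
  · rw [Set.mem_uIcc] at hx1mem
    rcases hx1mem with ⟨h1, h2⟩ | ⟨h1, h2⟩
    · exact ⟨lt_of_lt_of_le hx0pos h1, lt_of_le_of_lt h2 hx2.2⟩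
    · exact ⟨lt_of_lt_of_le hx2.1 h1, lt_of_le_of_lt h2 hx0lt⟩
  · have : Atanh x1 - β * x1 = 0 := hx1
    linarith



/-- The Curie-Weiss equation `tanh (β x) = x`, for `β ≥ 0`, has `0` as its unique real
solution iff `β ≤ 1`; and for `β > 1` there are exactly three solutions
`-x₁, 0, x₁` with `x₁ ∈ (0, 1)`. -/
theorem curie_weiss_equation_solutions (β : ℝ) (hβ : 0 ≤ β) :
    ((∀ x : ℝ, Real.tanh (β * x) = x ↔ x = 0) ↔ β ≤ 1) ∧
      (1 < β → ∃ x1 : ℝ, x1 ∈ Set.Ioo (0 : ℝ) 1 ∧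
        ∀ x : ℝ, Real.tanh (β * x) = x ↔ (x = -x1 ∨ x = 0 ∨ x = x1)) := by
  have no_pos_sol : β ≤ 1 → ∀ x : ℝ, Real.tanh (β * x) = x → 0 < x → False := by
    intro hβ1 x hx hxpos
    obtain ⟨hxI, heq⟩ := solution_iff.mp hx
    have hgt : x < Atanh x := Atanh_gt ⟨hxpos, hxI.2⟩
    have : β * x ≤ x := by nlinarith
    linarith [heq ▸ this]
  have partB : 1 < β → ∃ x1 : ℝ, x1 ∈ Set.Ioo (0 : ℝ) 1 ∧
      ∀ x : ℝ, Real.tanh (β * x) = x ↔ (x = -x1 ∨ x = 0 ∨ x = x1) := by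
    intro hβ1
    obtain ⟨x1, hx1I, hx1⟩ := exists_pos_root hβ1
    refine ⟨x1, hx1I, fun x => ⟨fun hx => ?_, fun hx => ?_⟩⟩
    · obtain ⟨hxI, heq⟩ := solution_iff.mp hx
      rcases lt_trichotomy x 0 with h | h | h
      · left
        have hy : Real.tanh (β * (-x)) = -x := by
          rw [show β * (-x) = -(β * x) by ring, Real.tanh_neg, hx]
        obtain ⟨hyI, heqy⟩ := solution_iff.mp hy
        have := pos_root_unique (a := -x) ⟨by linarith, hyI.2⟩ hx1I heqy hx1
        linarith
      · right; left; exact h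
      · right; right
        exact pos_root_unique ⟨h, hxI.2⟩ hx1I heq hx1
    · rcases hx with h | h | h
      · subst h
        rw [show β * (-x1) = -(β * x1) by ring, Real.tanh_neg,
          solution_iff.mpr ⟨⟨by linarith [hx1I.1], hx1I.2⟩, hx1⟩]
      · subst h; simp [Real.tanh_zero]
      · subst h
        exact solution_iff.mpr ⟨⟨by linarith [hx1I.1], hx1I.2⟩, hx1⟩
  refine ⟨⟨fun h => ?_, fun hβ1 x => ⟨fun hx => ?_, fun hx => by simp [hx, Real.tanh_zero]⟩⟩, partB⟩
  · by_contra hc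
    push_neg at hc
    obtain ⟨x1, hx1I, hx1⟩ := partB hc
    have : x1 = 0 := (h x1).mp ((hx1 x1).mpr (Or.inr (Or.inr rfl)))
    linarith [hx1I.1]
  · rcases lt_trichotomy x 0 with h | h | h
    · exfalso
      have hy : Real.tanh (β * (-x)) = -x := by
        rw [show β * (-x) = -(β * x) by ring, Real.tanh_neg, hx]
      exact no_pos_sol hβ1 (-x) hy (by linarith)
    · exact h
    · exact absurd (no_pos_sol hβ1 x hx h) not_false
end

section
/- Define F: ℝ^M → ℝ by F(y) = (1/2) yᵀ L y - Σ_λ α_λ ln cosh(y_λ), where L is symmetric positive definite and α_λ ≥ 0. If H = L - diag(α_1,…,α_M) is positive semi-definite, then the origin is the unique global minimum of F. -/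
open Matrix

lemma sinh_lt_mul_cosh {t : ℝ} (ht : 0 < t) : Real.sinh t < t * Real.cosh t := by
  have h : StrictMonoOn (fun t : ℝ => t * Real.cosh t - Real.sinh t) (Set.Ici 0) := by
    apply strictMonoOn_of_deriv_pos (convex_Ici 0)
    · fun_prop
    · intro x hx
      rw [interior_Ici] at hx
      have hx' : (0:ℝ) < x := hx
      have hd : HasDerivAt (fun t : ℝ => t * Real.cosh t - Real.sinh t)
          (1 * Real.cosh x + x * Real.sinh x - Real.cosh x) x :=
        ((hasDerivAt_id x).mul (Real.hasDerivAt_cosh x)).sub (Real.hasDerivAt_sinh x)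
      rw [hd.deriv]
      have hs : 0 < Real.sinh x := Real.sinh_pos_iff.mpr hx'
      nlinarith
  have := h (Set.self_mem_Ici) (Set.mem_Ici.mpr ht.le) ht
  simp at this
  linarith

lemma log_cosh_lt {t : ℝ} (ht : t ≠ 0) : Real.log (Real.cosh t) < t ^ 2 / 2 := by
  wlog hpos : 0 < t generalizing t
  · have hneg : 0 < -t := by
      rcases lt_or_gt_of_ne ht with h | h
      · linarith
      · exact absurd h hpos
    have := this (by linarith) hneg
    simpa using this
  have h : StrictMonoOn (fun t : ℝ => t ^ 2 / 2 - Real.log (Real.cosh t)) (Set.Ici 0) := by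
    apply strictMonoOn_of_deriv_pos (convex_Ici 0)
    · have : Continuous fun t : ℝ => t ^ 2 / 2 - Real.log (Real.cosh t) := by
        refine Continuous.sub (by continuity) ?_
        exact (Real.continuousOn_log.comp_continuous Real.continuous_cosh
          (fun x => (Real.cosh_pos x).ne'))
      exact this.continuousOn
    · intro x hx
      rw [interior_Ici] at hx
      have hx' : (0:ℝ) < x := hx
      have hcpos : 0 < Real.cosh x := Real.cosh_pos x
      have hd : HasDerivAt (fun t : ℝ => t ^ 2 / 2 - Real.log (Real.cosh t))
          (x - Real.sinh x / Real.cosh x) x := by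
        have h1 : HasDerivAt (fun t : ℝ => t ^ 2 / 2) x x := by
          simpa using (hasDerivAt_pow 2 x).div_const 2
        have h2 : HasDerivAt (fun t : ℝ => Real.log (Real.cosh t))
            (Real.sinh x / Real.cosh x) x :=
          (Real.hasDerivAt_cosh x).log hcpos.ne'
        exact h1.sub h2
      rw [hd.deriv]
      have := sinh_lt_mul_cosh hx'
      rw [sub_pos, div_lt_iff₀ hcpos]
      linarith
  have := h (Set.self_mem_Ici) (Set.mem_Ici.mpr hpos.le) hpos
  simp at this
  linarith

lemma log_cosh_le (t : ℝ) : Real.log (Real.cosh t) ≤ t ^ 2 / 2 := by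
  by_cases ht : t = 0
  · simp [ht]
  · exact (log_cosh_lt ht).le

/-- If `H = L - diag(α)` is positive semi-definite (with `L` symmetric positive definite
and `α ≥ 0`), then the origin is the unique global minimum of
`F(y) = ½ yᵀ L y - Σ_λ α_λ ln cosh y_λ`. -/
theorem F_unique_global_minimum_at_origin
    (M : ℕ) (L : Matrix (Fin M) (Fin M) ℝ) (hLsymm : L.IsSymm) (hLpd : L.PosDef)
    (α : Fin M → ℝ) (hα : ∀ lam, 0 ≤ α lam)
    (hH : (L - Matrix.diagonal α).PosSemidef) :
    ∀ y : Fin M → ℝ, y ≠ 0 →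
      ((1 / 2) * ((0 : Fin M → ℝ) ⬝ᵥ L.mulVec 0)
          - ∑ lam, α lam * Real.log (Real.cosh ((0 : Fin M → ℝ) lam)))
        < (1 / 2) * (y ⬝ᵥ L.mulVec y) - ∑ lam, α lam * Real.log (Real.cosh (y lam)) := by
  intro y hy
  have hzero : ((1 / 2) * ((0 : Fin M → ℝ) ⬝ᵥ L.mulVec 0)
      - ∑ lam, α lam * Real.log (Real.cosh ((0 : Fin M → ℝ) lam))) = 0 := by
    simp
  rw [hzero]
  have hDdot : y ⬝ᵥ (Matrix.diagonal α).mulVec y = ∑ lam, α lam * y lam ^ 2 := by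
    simp only [dotProduct, Matrix.mulVec_diagonal]
    exact Finset.sum_congr rfl fun i _ => by ring
  have hkey : y ⬝ᵥ L.mulVec y
      = y ⬝ᵥ ((L - Matrix.diagonal α).mulVec y) + ∑ lam, α lam * y lam ^ 2 := by
    rw [Matrix.sub_mulVec, dotProduct_sub, hDdot]; ring
  have hHnn : 0 ≤ y ⬝ᵥ ((L - Matrix.diagonal α).mulVec y) := by
    have := hH.dotProduct_mulVec_nonneg y
    simpa using this
  have hLpos : 0 < y ⬝ᵥ L.mulVec y := by
    have := hLpd.dotProduct_mulVec_pos hy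
    simpa using this
  by_cases hex : ∃ lam, α lam ≠ 0 ∧ y lam ≠ 0
  · obtain ⟨l0, hl0α, hl0y⟩ := hex
    have hsum : ∑ lam, α lam * Real.log (Real.cosh (y lam))
        < ∑ lam, α lam * (y lam ^ 2 / 2) := by
      apply Finset.sum_lt_sum
      · intro i _
        exact mul_le_mul_of_nonneg_left (log_cosh_le (y i)) (hα i)
      · exact ⟨l0, Finset.mem_univ l0, by
          exact mul_lt_mul_of_pos_left (log_cosh_lt hl0y) ((hα l0).lt_of_ne' hl0α)⟩
    have h2 : ∑ lam, α lam * (y lam ^ 2 / 2) = (1/2) * ∑ lam, α lam * y lam ^ 2 := by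
      rw [Finset.mul_sum]
      exact Finset.sum_congr rfl fun i _ => by ring
    rw [h2] at hsum
    nlinarith [hkey, hHnn]
  · push_neg at hex
    have hsum : ∑ lam, α lam * Real.log (Real.cosh (y lam)) = 0 := by
      apply Finset.sum_eq_zero
      intro i _
      by_cases hαi : α i = 0
      · simp [hαi]
      · simp [hex i hαi]
    rw [hsum]
    linarith
end

section
/- For all natural numbers k, K with k ≤ K, the k-th derivative of the function x ↦ tanh(x)^K at x = 0 equals 0 if k < K and equals K! if k = K. -/
lemma contDiff_tanh_aux : ContDiff ℝ ⊤ Real.tanh := by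
  have h : Real.tanh = fun x => Real.sinh x / Real.cosh x :=
    funext Real.tanh_eq_sinh_div_cosh
  rw [h]
  exact Real.contDiff_sinh.div Real.contDiff_cosh fun x => (Real.cosh_pos x).ne'

lemma hasDerivAt_tanh_aux (x : ℝ) :
    HasDerivAt Real.tanh (1 - Real.tanh x ^ 2) x := by
  have h : Real.tanh = fun x => Real.sinh x / Real.cosh x :=
    funext Real.tanh_eq_sinh_div_cosh
  have hd := (Real.hasDerivAt_sinh x).div (Real.hasDerivAt_cosh x) (Real.cosh_pos x).ne'
  rw [h]
  refine hd.congr_deriv ?_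
  have hc := (Real.cosh_pos x).ne'
  have hs := Real.cosh_sq_sub_sinh_sq x
  field_simp

lemma deriv_tanh_pow_aux (n : ℕ) (hn : 1 ≤ n) :
    deriv (fun x : ℝ => Real.tanh x ^ n) =
      fun x => (n : ℝ) * Real.tanh x ^ (n - 1) - (n : ℝ) * Real.tanh x ^ (n + 1) := by
  funext x
  have h := (hasDerivAt_tanh_aux x).pow n
  rw [show deriv (fun x : ℝ => Real.tanh x ^ n) x = _ from h.deriv]
  have e : Real.tanh x ^ (n - 1) * Real.tanh x ^ 2 = Real.tanh x ^ (n + 1) := by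
    rw [← pow_add]; congr 1; omega
  rw [mul_sub, mul_one, mul_assoc, e]

lemma iteratedDeriv_sub_aux {n : ℕ} {f g : ℝ → ℝ} (hf : ContDiff ℝ n f)
    (hg : ContDiff ℝ n g) (x : ℝ) :
    iteratedDeriv n (fun y => f y - g y) x = iteratedDeriv n f x - iteratedDeriv n g x := by
  have : (fun y => f y - g y) = f - g := rfl
  rw [this, ← iteratedDerivWithin_univ, ← iteratedDerivWithin_univ, ← iteratedDerivWithin_univ,
    iteratedDerivWithin_sub (Set.mem_univ x) uniqueDiffOn_univ hf.contDiffWithinAt hg.contDiffWithinAt]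

lemma iteratedDeriv_const_mul_aux {n : ℕ} {f : ℝ → ℝ} (hf : ContDiff ℝ n f) (c x : ℝ) :
    iteratedDeriv n (fun y => c * f y) x = c * iteratedDeriv n f x := by
  rw [← iteratedDerivWithin_univ, ← iteratedDerivWithin_univ,
    iteratedDerivWithin_const_mul (Set.mem_univ x) uniqueDiffOn_univ c hf.contDiffWithinAt]

lemma tanh_pow_contDiff (m n : ℕ) : ContDiff ℝ n (fun x : ℝ => Real.tanh x ^ m) :=
  ((contDiff_tanh_aux.of_le le_top).pow m)

lemma key_aux (k : ℕ) : ∀ K : ℕ,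
    (k < K → iteratedDeriv k (fun x : ℝ => Real.tanh x ^ K) 0 = 0) ∧
      (k = K → iteratedDeriv k (fun x : ℝ => Real.tanh x ^ K) 0 = K.factorial) := by
  induction k with
  | zero =>
    intro K
    constructor
    · intro hK
      simp [iteratedDeriv_zero, Real.tanh_zero, zero_pow (by omega : K ≠ 0)]
    · rintro rfl
      simp [iteratedDeriv_zero]
  | succ k ih =>
    intro K
    have step : ∀ K : ℕ, 1 ≤ K →
        iteratedDeriv (k + 1) (fun x : ℝ => Real.tanh x ^ K) 0 =
          (K : ℝ) * iteratedDeriv k (fun x : ℝ => Real.tanh x ^ (K - 1)) 0 -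
            (K : ℝ) * iteratedDeriv k (fun x : ℝ => Real.tanh x ^ (K + 1)) 0 := by
      intro K hK
      rw [iteratedDeriv_succ', deriv_tanh_pow_aux K hK]
      rw [iteratedDeriv_sub_aux (contDiff_const.mul (tanh_pow_contDiff _ k))
        (contDiff_const.mul (tanh_pow_contDiff _ k)),
        iteratedDeriv_const_mul_aux (tanh_pow_contDiff _ k),
        iteratedDeriv_const_mul_aux (tanh_pow_contDiff _ k)]
    constructor
    · intro hkK
      have h1 : 1 ≤ K := by omega
      rw [step K h1, (ih (K - 1)).1 (by omega), (ih (K + 1)).1 (by omega)]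
      ring
    · rintro rfl
      have h1 : 1 ≤ k + 1 := by omega
      rw [step (k + 1) h1]
      have e1 : iteratedDeriv k (fun x : ℝ => Real.tanh x ^ (k + 1 - 1)) 0 = k.factorial := by
        simpa using (ih (k + 1 - 1)).2 (by omega)
      have e2 : iteratedDeriv k (fun x : ℝ => Real.tanh x ^ (k + 1 + 1)) 0 = 0 :=
        (ih (k + 1 + 1)).1 (by omega)
      rw [e1, e2, Nat.factorial_succ]
      push_cast
      ring

/-- For `k ≤ K`, the `k`-th derivative of `x ↦ tanh(x)^K` at `x = 0` is `0` if `k < K`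
and `K!` if `k = K`. -/
theorem iteratedDeriv_tanh_pow_at_zero (k K : ℕ) (hK : 1 ≤ K) (hkK : k ≤ K) :
    (k < K → iteratedDeriv k (fun x : ℝ => Real.tanh x ^ K) 0 = 0) ∧
      (k = K → iteratedDeriv k (fun x : ℝ => Real.tanh x ^ K) 0 = K.factorial) := by
  exact key_aux k K
end

section
/- Let N, L ∈ ℕ, and let r = (r_1,…,r_L) be a profile vector (non-negative integers with Σ_{ℓ=1}^L ℓ·r_ℓ = L) with Σ_ℓ r_ℓ ≤ N. Set r_0 := N - Σ_{ℓ=1}^L r_ℓ. Then the number of multiindices i ∈ {1,…,N}^L whose profile ρ(i) equals r is N!/(r_1! r_2! ⋯ r_L! r_0!) · L!/(1!^{r_1} 2!^{r_2} ⋯ L!^{r_L}). -/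
open scoped Classical
open Finset


lemma exists_perm_comp_eq {α β : Type*} [Fintype α] (f g : α → β)
    (h : ∀ b, Nat.card {a // f a = b} = Nat.card {a // g a = b}) :
    ∃ τ : Equiv.Perm α, f ∘ τ = g := by
  have e : ∀ b, {a // g a = b} ≃ {a // f a = b} := fun b =>
    Fintype.equivOfCardEq (by
      rw [← Nat.card_eq_fintype_card, ← Nat.card_eq_fintype_card]
      exact (h b).symm)
  refine ⟨((Equiv.sigmaFiberEquiv g).symm.trans
    ((Equiv.sigmaCongrRight e).trans (Equiv.sigmaFiberEquiv f))), ?_⟩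
  funext a
  exact (e (g a) ⟨a, rfl⟩).2

lemma exists_profile_fun (N L : ℕ) (r : ℕ → ℕ)
    (hr : ∑ ℓ ∈ Finset.Icc 1 L, ℓ * r ℓ = L)
    (hrN : ∑ ℓ ∈ Finset.Icc 1 L, r ℓ ≤ N) :
    ∃ i₀ : Fin L → Fin N, ∀ ℓ ∈ Finset.Icc 1 L,
      (Finset.univ.filter
        (fun j : Fin N =>
          (Finset.univ.filter (fun k : Fin L => i₀ k = j)).card = ℓ)).card = r ℓ := by
  set V := Σ ℓ : {x // x ∈ Finset.Icc 1 L}, Fin (r ℓ.val) with hV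
  set T := Σ v : V, Fin v.1.val with hT
  have hcardV : Fintype.card V = ∑ ℓ ∈ Finset.Icc 1 L, r ℓ := by
    simp [hV, Fintype.card_sigma, Finset.sum_attach _ (fun ℓ => r ℓ)]
  have hcardT : Fintype.card T = L := by
    calc Fintype.card T = ∑ v : V, Fintype.card (Fin v.1.val) := Fintype.card_sigma
      _ = ∑ v : V, v.1.val := Finset.sum_congr rfl (fun v _ => Fintype.card_fin _)
      _ = ∑ ℓ : {x // x ∈ Finset.Icc 1 L}, ∑ _a : Fin (r ℓ.val), ℓ.val := by
          rw [← Finset.univ_sigma_univ, Finset.sum_sigma]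
      _ = ∑ ℓ : {x // x ∈ Finset.Icc 1 L}, ℓ.val * r ℓ.val := by
          exact Finset.sum_congr rfl (fun ℓ _ => by simp [mul_comm])
      _ = ∑ ℓ ∈ Finset.Icc 1 L, ℓ * r ℓ := by
          exact Finset.sum_coe_sort _ (fun x => x * r x)
      _ = L := hr
  obtain ⟨emb⟩ : Nonempty (V ↪ Fin N) :=
    Function.Embedding.nonempty_of_card_le (by rw [hcardV]; simpa using hrN)
  have e : Fin L ≃ T := Fintype.equivOfCardEq (by simp [hcardT])
  set i₀ : Fin L → Fin N := fun k => emb (e k).1 with hi₀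
  have cnt_emb : ∀ v : V, (Finset.univ.filter (fun k : Fin L => i₀ k = emb v)).card = v.1.val := by
    intro v
    rw [← Fintype.card_subtype]
    have e1 : {k : Fin L // i₀ k = emb v} ≃ {t : T // t.1 = v} := by
      refine (Equiv.subtypeEquiv e (fun k => ?_))
      simp only [hi₀]
      exact ⟨fun h => emb.injective h, fun h => by rw [h]⟩
    have e2 : {t : T // t.1 = v} ≃ Fin v.1.val := by
      refine Equiv.symm (Equiv.ofBijective (fun a => ⟨⟨v, a⟩, rfl⟩) ⟨?_, ?_⟩)
      · intro a b hab
        have h1 : (⟨v, a⟩ : Σ w : V, Fin w.1.val) = ⟨v, b⟩ := congrArg Subtype.val hab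
        exact eq_of_heq (Sigma.mk.inj_iff.mp h1).2
      · rintro ⟨⟨w, a⟩, (h : w = v)⟩
        subst h
        exact ⟨a, rfl⟩
    rw [Fintype.card_congr (e1.trans e2), Fintype.card_fin]
  refine ⟨i₀, fun m hm => ?_⟩
  have hm1 : 1 ≤ m := (Finset.mem_Icc.mp hm).1
  have himg : (Finset.univ.filter
        (fun j : Fin N =>
          (Finset.univ.filter (fun k : Fin L => i₀ k = j)).card = m))
      = (Finset.univ.filter (fun v : V => v.1.val = m)).image emb := by
    ext j
    simp only [Finset.mem_filter, Finset.mem_univ, true_and, Finset.mem_image]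
    constructor
    · intro hj
      have hpos : 0 < (Finset.univ.filter (fun k : Fin L => i₀ k = j)).card := by omega
      obtain ⟨k, hk⟩ := Finset.card_pos.mp hpos
      have hk' : i₀ k = j := (Finset.mem_filter.mp hk).2
      refine ⟨(e k).1, ?_, hk'⟩
      rw [← hk', cnt_emb] at hj
      simpa using hj
    · rintro ⟨v, hv, rfl⟩
      rw [cnt_emb]; exact hv
  rw [himg, Finset.card_image_of_injective _ emb.injective]
  have hsig : (Finset.univ.filter (fun v : V => v.1.val = m))
      = Finset.sigma ((Finset.Icc 1 L).attach.filter
          (fun ℓ : {x // x ∈ Finset.Icc 1 L} => ℓ.val = m))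
          (fun ℓ => Finset.univ) := by
    ext ⟨ℓ, a⟩
    simp only [Finset.mem_filter, Finset.mem_univ, true_and]
    constructor
    · intro h
      exact Finset.mem_sigma.mpr
        ⟨Finset.mem_filter.mpr ⟨Finset.mem_attach _ _, h⟩, Finset.mem_univ _⟩
    · intro h
      exact (Finset.mem_filter.mp (Finset.mem_sigma.mp h).1).2
  rw [hsig, Finset.card_sigma]
  have hfilt : ((Finset.Icc 1 L).attach.filter
      (fun ℓ : {x // x ∈ Finset.Icc 1 L} => ℓ.val = m)) = {⟨m, hm⟩} := by
    ext ℓ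
    simp [Subtype.ext_iff]
  rw [hfilt]
  simp

namespace CMWP

variable {N L : ℕ}

/-- fiber count -/
noncomputable def cnt (i : Fin L → Fin N) (j : Fin N) : ℕ :=
  (Finset.univ.filter (fun k : Fin L => i k = j)).card

lemma cnt_le (i : Fin L → Fin N) (j : Fin N) : cnt i j ≤ L := by
  simpa [cnt] using (Finset.card_filter_le Finset.univ (fun k : Fin L => i k = j)).trans (by simp)

lemma cnt_comp (i : Fin L → Fin N) (σ : Equiv.Perm (Fin N)) (τ : Equiv.Perm (Fin L))
    (j : Fin N) : cnt (⇑σ ∘ i ∘ ⇑τ) j = cnt i (σ.symm j) := by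
  unfold cnt
  apply Finset.card_nbij' (fun k => τ k) (fun k => τ.symm k)
  · intro k hk
    simp only [Finset.mem_coe, Finset.mem_filter, Finset.mem_univ, true_and, Function.comp] at hk ⊢
    exact (Equiv.eq_symm_apply σ).mpr hk
  · intro k hk
    simp only [Finset.mem_coe, Finset.mem_filter, Finset.mem_univ, true_and, Function.comp] at hk ⊢
    simp only [Equiv.apply_symm_apply]
    rw [hk]; simp
  · intro k _; simp
  · intro k _; simp

/-- count of values with given fiber count, under composition -/
lemma vcnt_comp (i : Fin L → Fin N) (σ : Equiv.Perm (Fin N)) (τ : Equiv.Perm (Fin L)) (m : ℕ) :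
    (Finset.univ.filter (fun j : Fin N => cnt (⇑σ ∘ i ∘ ⇑τ) j = m)).card
      = (Finset.univ.filter (fun j : Fin N => cnt i j = m)).card := by
  apply Finset.card_nbij' (fun j => σ.symm j) (fun j => σ j)
  · intro j hj
    simp only [Finset.mem_coe, Finset.mem_filter, Finset.mem_univ, true_and] at hj ⊢
    rw [← cnt_comp i σ τ]; exact hj
  · intro j hj
    simp only [Finset.mem_coe, Finset.mem_filter, Finset.mem_univ, true_and] at hj ⊢
    rw [cnt_comp i σ τ]; simpa
  · intro j _; simp
  · intro j _; simp

end CMWP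

namespace CMWP

variable {N L : ℕ} {r : ℕ → ℕ}

lemma vcnt_zero (i : Fin L → Fin N)
    (hi : ∀ ℓ ∈ Finset.Icc 1 L,
      (Finset.univ.filter (fun j : Fin N => cnt i j = ℓ)).card = r ℓ) :
    (Finset.univ.filter (fun j : Fin N => cnt i j = 0)).card
      = N - ∑ ℓ ∈ Finset.Icc 1 L, r ℓ := by
  have hins : Finset.range (L + 1) = insert 0 (Finset.Icc 1 L) := by
    ext x; simp [Nat.lt_succ_iff]; omega
  have hcard : (Finset.univ : Finset (Fin N)).card
      = ∑ m ∈ Finset.range (L + 1),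
          (Finset.univ.filter (fun j : Fin N => cnt i j = m)).card :=
    Finset.card_eq_sum_card_fiberwise
      (fun j _ => Finset.mem_range.mpr (Nat.lt_succ_of_le (cnt_le i j)))
  rw [hins, Finset.sum_insert (by simp)] at hcard
  rw [show ∑ m ∈ Finset.Icc 1 L,
      (Finset.univ.filter (fun j : Fin N => cnt i j = m)).card
      = ∑ ℓ ∈ Finset.Icc 1 L, r ℓ from Finset.sum_congr rfl hi] at hcard
  simp only [Finset.card_univ, Fintype.card_fin] at hcard
  omega

lemma vcnt_high (i : Fin L → Fin N) (m : ℕ) (hm : L < m) :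
    (Finset.univ.filter (fun j : Fin N => cnt i j = m)).card = 0 := by
  rw [Finset.card_eq_zero, Finset.filter_eq_empty_iff]
  intro j _
  have := cnt_le i j
  omega

lemma fibercard_eq (i i' : Fin L → Fin N)
    (hi : ∀ ℓ ∈ Finset.Icc 1 L,
      (Finset.univ.filter (fun j : Fin N => cnt i j = ℓ)).card = r ℓ)
    (hi' : ∀ ℓ ∈ Finset.Icc 1 L,
      (Finset.univ.filter (fun j : Fin N => cnt i' j = ℓ)).card = r ℓ)
    (m : ℕ) :
    Nat.card {j : Fin N // cnt i j = m} = Nat.card {j : Fin N // cnt i' j = m} := by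
  rw [Nat.card_eq_fintype_card, Nat.card_eq_fintype_card,
    Fintype.card_subtype, Fintype.card_subtype]
  rcases Nat.eq_zero_or_pos m with h0 | h1
  · subst h0; rw [vcnt_zero i hi, vcnt_zero i' hi']
  · rcases le_or_gt m L with h2 | h2
    · rw [hi m (Finset.mem_Icc.mpr ⟨h1, h2⟩), hi' m (Finset.mem_Icc.mpr ⟨h1, h2⟩)]
    · rw [vcnt_high i m h2, vcnt_high i' m h2]

lemma exists_comp_eq (i i' : Fin L → Fin N)
    (hi : ∀ ℓ ∈ Finset.Icc 1 L,
      (Finset.univ.filter (fun j : Fin N => cnt i j = ℓ)).card = r ℓ)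
    (hi' : ∀ ℓ ∈ Finset.Icc 1 L,
      (Finset.univ.filter (fun j : Fin N => cnt i' j = ℓ)).card = r ℓ) :
    ∃ (σ : Equiv.Perm (Fin N)) (τ : Equiv.Perm (Fin L)), ⇑σ ∘ i ∘ ⇑τ = i' := by
  obtain ⟨σ₀, hσ₀⟩ := exists_perm_comp_eq (cnt i) (cnt i')
    (fun m => fibercard_eq i i' hi hi' m)
  have key : ∀ j, cnt (⇑σ₀.symm ∘ i) j = cnt i' j := by
    intro j
    have h1 : cnt (⇑σ₀.symm ∘ i ∘ ⇑(Equiv.refl (Fin L))) j = cnt i (σ₀ j) := by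
      rw [cnt_comp]; simp
    have h2 : (⇑σ₀.symm ∘ i ∘ ⇑(Equiv.refl (Fin L))) = ⇑σ₀.symm ∘ i := by
      simp [Function.comp_def]
    rw [h2] at h1
    rw [h1, ← hσ₀]
    rfl
  obtain ⟨τ, hτ⟩ := exists_perm_comp_eq (⇑σ₀.symm ∘ i) i' (fun j => by
    rw [Nat.card_eq_fintype_card, Nat.card_eq_fintype_card,
      Fintype.card_subtype, Fintype.card_subtype]
    exact key j)
  exact ⟨σ₀.symm, τ, by rw [← Function.comp_assoc]; exact hτ⟩

end CMWP

namespace CMWP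

variable {N L : ℕ} {r : ℕ → ℕ}

lemma K_count (i₀ : Fin L → Fin N)
    (hi₀ : ∀ ℓ ∈ Finset.Icc 1 L,
      (Finset.univ.filter (fun j : Fin N => cnt i₀ j = ℓ)).card = r ℓ) :
    (Finset.univ.filter (fun τ : Equiv.Perm (Fin L) => i₀ ∘ ⇑τ = i₀)).card
      = ∏ ℓ ∈ Finset.Icc 1 L, (Nat.factorial ℓ) ^ (r ℓ) := by
  rw [← Fintype.card_subtype, DomMulAct.stabilizer_card]
  have h1 : ∀ j : Fin N, Fintype.card {k : Fin L // i₀ k = j} = cnt i₀ j := fun j =>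
    Fintype.card_subtype _
  calc ∏ j : Fin N, (Fintype.card {k : Fin L // i₀ k = j}).factorial
      = ∏ j : Fin N, (cnt i₀ j).factorial := by
        exact Finset.prod_congr rfl (fun j _ => by rw [h1])
    _ = ∏ m ∈ Finset.range (L + 1), ∏ j ∈ Finset.univ.filter (fun j : Fin N => cnt i₀ j = m),
          (cnt i₀ j).factorial := by
        rw [Finset.prod_fiberwise_of_maps_to
          (fun j _ => Finset.mem_range.mpr (Nat.lt_succ_of_le (cnt_le i₀ j)))]
    _ = ∏ m ∈ Finset.range (L + 1),
          (Nat.factorial m) ^ (Finset.univ.filter (fun j : Fin N => cnt i₀ j = m)).card := by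
        refine Finset.prod_congr rfl (fun m _ => ?_)
        rw [Finset.prod_congr rfl (fun j hj => by rw [(Finset.mem_filter.mp hj).2]),
          Finset.prod_const]
    _ = ∏ ℓ ∈ Finset.Icc 1 L, (Nat.factorial ℓ) ^ (r ℓ) := by
        have hins : Finset.range (L + 1) = insert 0 (Finset.Icc 1 L) := by
          ext x; simp [Nat.lt_succ_iff]; omega
        rw [hins, Finset.prod_insert (by simp)]
        simp only [Nat.factorial_zero, one_pow, one_mul]
        exact Finset.prod_congr rfl (fun m hm => by rw [hi₀ m hm])

end CMWP

namespace CMWP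

variable {N L : ℕ} {r : ℕ → ℕ}

lemma P_count (i₀ : Fin L → Fin N)
    (hi₀ : ∀ ℓ ∈ Finset.Icc 1 L,
      (Finset.univ.filter (fun j : Fin N => cnt i₀ j = ℓ)).card = r ℓ) :
    (Finset.univ.filter (fun σ : Equiv.Perm (Fin N) => cnt i₀ ∘ ⇑σ = cnt i₀)).card
      = (∏ ℓ ∈ Finset.Icc 1 L, (r ℓ).factorial)
        * (N - ∑ ℓ ∈ Finset.Icc 1 L, r ℓ).factorial := by
  set c : Fin N → ℕ := cnt i₀ with hc
  set c' : Fin N → Fin (L + 1) :=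
    fun j => ⟨c j, Nat.lt_succ_of_le (cnt_le i₀ j)⟩ with hc'
  have hiff : ∀ σ : Equiv.Perm (Fin N), (c ∘ ⇑σ = c) ↔ (c' ∘ ⇑σ = c') := by
    intro σ
    constructor
    · intro h; funext j; exact Fin.ext (congrFun h j)
    · intro h; funext j; exact congrArg Fin.val (congrFun h j)
  rw [← Fintype.card_subtype,
    Fintype.card_congr (Equiv.subtypeEquivRight hiff),
    DomMulAct.stabilizer_card]
  have h1 : ∀ m : Fin (L + 1), Fintype.card {j : Fin N // c' j = m}
      = (Finset.univ.filter (fun j : Fin N => c j = (m : ℕ))).card := by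
    intro m
    rw [Fintype.card_congr (Equiv.subtypeEquivRight (fun j => Fin.ext_iff))]
    exact Fintype.card_subtype _
  calc ∏ m : Fin (L + 1), (Fintype.card {j : Fin N // c' j = m}).factorial
      = ∏ m : Fin (L + 1),
          ((Finset.univ.filter (fun j : Fin N => c j = (m : ℕ))).card).factorial := by
        exact Finset.prod_congr rfl (fun m _ => by rw [h1])
    _ = ∏ m ∈ Finset.range (L + 1),
          ((Finset.univ.filter (fun j : Fin N => c j = m)).card).factorial :=
        Fin.prod_univ_eq_prod_range
          (fun m => ((Finset.univ.filter (fun j : Fin N => c j = m)).card).factorial) (L + 1)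
    _ = (∏ ℓ ∈ Finset.Icc 1 L, (r ℓ).factorial)
        * (N - ∑ ℓ ∈ Finset.Icc 1 L, r ℓ).factorial := by
        have hins : Finset.range (L + 1) = insert 0 (Finset.Icc 1 L) := by
          ext x; simp [Nat.lt_succ_iff]; omega
        rw [hins, Finset.prod_insert (by simp), vcnt_zero i₀ hi₀,
          Finset.prod_congr rfl (fun m hm => by rw [hi₀ m hm]), mul_comm]

end CMWP

namespace CMWP

variable {N L : ℕ} {r : ℕ → ℕ}

lemma cnt_comp1 (i : Fin L → Fin N) (σ : Equiv.Perm (Fin N)) (j : Fin N) :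
    cnt (⇑σ ∘ i) j = cnt i (σ.symm j) := by
  have h := cnt_comp i σ (Equiv.refl (Fin L)) j
  have h2 : (⇑σ ∘ i ∘ ⇑(Equiv.refl (Fin L))) = ⇑σ ∘ i := by
    simp [Function.comp_def]
  rwa [h2] at h

lemma stab_count (i₀ : Fin L → Fin N)
    (hi₀ : ∀ ℓ ∈ Finset.Icc 1 L,
      (Finset.univ.filter (fun j : Fin N => cnt i₀ j = ℓ)).card = r ℓ) :
    (Finset.univ.filter
        (fun p : Equiv.Perm (Fin N) × Equiv.Perm (Fin L) => ⇑p.1 ∘ i₀ ∘ ⇑p.2 = i₀)).card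
      = ((∏ ℓ ∈ Finset.Icc 1 L, (r ℓ).factorial)
          * (N - ∑ ℓ ∈ Finset.Icc 1 L, r ℓ).factorial)
        * ∏ ℓ ∈ Finset.Icc 1 L, (Nat.factorial ℓ) ^ (r ℓ) := by
  classical
  set K := ∏ ℓ ∈ Finset.Icc 1 L, (Nat.factorial ℓ) ^ (r ℓ) with hK
  set S := (Finset.univ.filter
    (fun p : Equiv.Perm (Fin N) × Equiv.Perm (Fin L) => ⇑p.1 ∘ i₀ ∘ ⇑p.2 = i₀)) with hS
  have hfib : S.card = ∑ σ ∈ (Finset.univ : Finset (Equiv.Perm (Fin N))),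
      (S.filter (fun p => p.1 = σ)).card :=
    Finset.card_eq_sum_card_fiberwise (fun p _ => Finset.mem_univ _)
  have hfe : ∀ σ : Equiv.Perm (Fin N), (S.filter (fun p => p.1 = σ)).card
      = (Finset.univ.filter (fun τ : Equiv.Perm (Fin L) => ⇑σ ∘ i₀ ∘ ⇑τ = i₀)).card := by
    intro σ
    apply Finset.card_nbij' (fun p => p.2) (fun τ => (σ, τ))
    · intro p hp
      simp only [hS, Finset.mem_coe, Finset.mem_filter, Finset.mem_univ, true_and] at hp ⊢
      obtain ⟨h1, h2⟩ := hp
      rw [← h2]; exact h1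
    · intro τ hτ
      simp only [hS, Finset.mem_coe, Finset.mem_filter, Finset.mem_univ, true_and] at hτ ⊢
      exact ⟨hτ, trivial⟩
    · intro p hp
      simp only [hS, Finset.mem_coe, Finset.mem_filter] at hp
      rw [← hp.2]
    · intro τ _
      rfl
  have hτcount : ∀ σ : Equiv.Perm (Fin N),
      (Finset.univ.filter (fun τ : Equiv.Perm (Fin L) => ⇑σ ∘ i₀ ∘ ⇑τ = i₀)).card
        = if cnt i₀ ∘ ⇑σ = cnt i₀ then K else 0 := by
    intro σ
    by_cases hσ : cnt i₀ ∘ ⇑σ = cnt i₀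
    · rw [if_pos hσ]
      have hpt : ∀ x, cnt i₀ (σ x) = cnt i₀ x := fun x => congrFun hσ x
      obtain ⟨τ₀, hτ₀⟩ := exists_perm_comp_eq (⇑σ ∘ i₀) i₀ (fun j => by
        rw [Nat.card_eq_fintype_card, Nat.card_eq_fintype_card,
          Fintype.card_subtype, Fintype.card_subtype]
        have h1 : (Finset.univ.filter (fun k : Fin L => (⇑σ ∘ i₀) k = j)).card
            = cnt i₀ (σ.symm j) := cnt_comp1 i₀ σ j
        rw [h1]
        have := hpt (σ.symm j)
        simp only [Equiv.apply_symm_apply] at this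
        exact this.symm)
      -- hτ₀ : (⇑σ ∘ i₀) ∘ ⇑τ₀ = i₀
      have hτ₀' : ∀ x, σ (i₀ (τ₀ x)) = i₀ x := fun x => congrFun hτ₀ x
      rw [hK, ← K_count i₀ hi₀]
      apply Finset.card_nbij' (fun τ => τ₀.symm.trans τ) (fun u => τ₀.trans u)
      · intro τ hτ
        simp only [Finset.mem_coe, Finset.mem_filter, Finset.mem_univ, true_and] at hτ ⊢
        have hτ' : ∀ x, σ (i₀ (τ x)) = i₀ x := fun x => congrFun hτ x
        funext k
        have e1 : i₀ (τ (τ₀.symm k)) = i₀ (τ₀ (τ₀.symm k)) := by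
          apply σ.injective
          rw [hτ' (τ₀.symm k), hτ₀' (τ₀.symm k)]
        simpa [Function.comp] using e1.trans (by rw [Equiv.apply_symm_apply])
      · intro u hu
        simp only [Finset.mem_coe, Finset.mem_filter, Finset.mem_univ, true_and] at hu ⊢
        have hu' : ∀ x, i₀ (u x) = i₀ x := fun x => congrFun hu x
        funext k
        show σ (i₀ (u (τ₀ k))) = i₀ k
        rw [hu' (τ₀ k), hτ₀' k]
      · intro τ _
        ext x; simp
      · intro u _
        ext x; simp
    · rw [if_neg hσ, Finset.card_eq_zero, Finset.filter_eq_empty_iff]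
      intro τ _
      intro hcon
      apply hσ
      funext x
      have h1 : ∀ j, cnt i₀ j = cnt i₀ (σ.symm j) := by
        intro j
        conv_lhs => rw [← hcon]
        exact cnt_comp i₀ σ τ j
      have := h1 (σ x)
      simp only [Equiv.symm_apply_apply] at this
      exact this
  rw [hfib, Finset.sum_congr rfl (fun σ _ => (hfe σ).trans (hτcount σ)),
    ← Finset.sum_filter, Finset.sum_const, smul_eq_mul, P_count i₀ hi₀]

end CMWP

/-- The number of multiindices `i ∈ {1,…,N}^L` with a given profile `r`
(`r ℓ` values occur exactly `ℓ` times, `Σ ℓ r_ℓ = L`) equals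
`N!/(r₁!⋯r_L! r₀!) · L!/(1!^{r₁}⋯L!^{r_L})` where `r₀ = N - Σ r_ℓ`;
stated multiplicatively to avoid division. -/
theorem card_multiindices_with_profile (N L : ℕ) (hN : 0 < N) (hL : 0 < L)
    (r : ℕ → ℕ) (hr : ∑ ℓ ∈ Finset.Icc 1 L, ℓ * r ℓ = L)
    (hrN : ∑ ℓ ∈ Finset.Icc 1 L, r ℓ ≤ N) :
    (Finset.univ.filter
        (fun i : Fin L → Fin N => ∀ ℓ ∈ Finset.Icc 1 L,
          (Finset.univ.filter
            (fun j : Fin N =>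
              (Finset.univ.filter (fun k : Fin L => i k = j)).card = ℓ)).card = r ℓ)).card
      * ((∏ ℓ ∈ Finset.Icc 1 L, (r ℓ).factorial)
          * (N - ∑ ℓ ∈ Finset.Icc 1 L, r ℓ).factorial
          * ∏ ℓ ∈ Finset.Icc 1 L, (ℓ.factorial) ^ (r ℓ))
      = N.factorial * L.factorial := by
  obtain ⟨i₀, hi₀⟩ := exists_profile_fun N L r hr hrN
  have hi₀' : ∀ ℓ ∈ Finset.Icc 1 L,
      (Finset.univ.filter (fun j : Fin N => CMWP.cnt i₀ j = ℓ)).card = r ℓ := hi₀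
  have main : ∀ s : Finset (Fin L → Fin N),
      (∀ i, i ∈ s ↔ (∀ ℓ ∈ Finset.Icc 1 L,
        (Finset.univ.filter (fun j : Fin N => CMWP.cnt i j = ℓ)).card = r ℓ)) →
      s.card * ((∏ ℓ ∈ Finset.Icc 1 L, (r ℓ).factorial)
          * (N - ∑ ℓ ∈ Finset.Icc 1 L, r ℓ).factorial
          * ∏ ℓ ∈ Finset.Icc 1 L, (ℓ.factorial) ^ (r ℓ))
        = N.factorial * L.factorial := by
    intro A hmemA
    have htot : (Finset.univ :
          Finset (Equiv.Perm (Fin N) × Equiv.Perm (Fin L))).card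
        = ∑ i ∈ A, (Finset.univ.filter
            (fun p : Equiv.Perm (Fin N) × Equiv.Perm (Fin L) =>
              ⇑p.1 ∘ i₀ ∘ ⇑p.2 = i)).card := by
      apply Finset.card_eq_sum_card_fiberwise
      intro p _
      rw [Finset.mem_coe, hmemA]
      intro ℓ hℓ
      exact (CMWP.vcnt_comp i₀ p.1 p.2 ℓ).trans (hi₀' ℓ hℓ)
    have hfibers : ∀ i ∈ A, (Finset.univ.filter
        (fun p : Equiv.Perm (Fin N) × Equiv.Perm (Fin L) =>
          ⇑p.1 ∘ i₀ ∘ ⇑p.2 = i)).card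
        = (Finset.univ.filter
          (fun p : Equiv.Perm (Fin N) × Equiv.Perm (Fin L) =>
            ⇑p.1 ∘ i₀ ∘ ⇑p.2 = i₀)).card := by
      intro i hi
      obtain ⟨σ₁, τ₁, hστ⟩ := CMWP.exists_comp_eq i₀ i hi₀' ((hmemA i).mp hi)
      have hστ' : ∀ k, σ₁ (i₀ (τ₁ k)) = i k := fun k => congrFun hστ k
      apply Finset.card_nbij' (fun p => (p.1.trans σ₁.symm, τ₁.symm.trans p.2))
        (fun q => (q.1.trans σ₁, τ₁.trans q.2))
      · intro p hp
        simp only [Finset.mem_coe, Finset.mem_filter, Finset.mem_univ, true_and] at hp ⊢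
        have hp' : ∀ k, p.1 (i₀ (p.2 k)) = i k := fun k => congrFun hp k
        funext k
        show σ₁.symm (p.1 (i₀ (p.2 (τ₁.symm k)))) = i₀ k
        rw [hp' (τ₁.symm k)]
        apply σ₁.injective
        rw [Equiv.apply_symm_apply]
        have := hστ' (τ₁.symm k)
        rw [Equiv.apply_symm_apply] at this
        exact this.symm
      · intro q hq
        simp only [Finset.mem_coe, Finset.mem_filter, Finset.mem_univ, true_and] at hq ⊢
        have hq' : ∀ k, q.1 (i₀ (q.2 k)) = i₀ k := fun k => congrFun hq k
        funext k
        show σ₁ (q.1 (i₀ (q.2 (τ₁ k)))) = i k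
        rw [hq' (τ₁ k), hστ' k]
      · intro p _
        ext x
        · simp
        · simp
      · intro q _
        ext x
        · simp
        · simp
    rw [Finset.sum_congr rfl hfibers, Finset.sum_const, smul_eq_mul,
      CMWP.stab_count i₀ hi₀'] at htot
    have hcard : (Finset.univ :
        Finset (Equiv.Perm (Fin N) × Equiv.Perm (Fin L))).card
        = N.factorial * L.factorial := by
      rw [Finset.card_univ]
      simp [Fintype.card_perm]
    rw [← hcard, htot]
  apply main
  intro i
  simp only [Finset.mem_filter, Finset.mem_univ, true_and]
  rfl
end
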